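/- Let c, t₀ ∈ ℝ and b(t) = c(t-t₀)/(1 - 2c(t-t₀)). Then u(x,t) = b(t)(x + 1) solves the non-homogeneous Burgers equation ∂_t u - (1/(t-t₀)) ∂_x(u²) = ∂_xx u + (1/(t-t₀)) u on the open set where t ≠ t₀ and 1 - 2c(t-t₀) ≠ 0. -/

import Mathlib

theorem burgers_invariant_solution (c t₀ : ℝ) (b : ℝ → ℝ)
    (hb : ∀ t, b t = c * (t - t₀) / (1 - 2 * c * (t - t₀)))
    (u : ℝ → ℝ → ℝ) (hu : ∀ x t, u x t = b t * (x + 1)) :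
    ∀ x t : ℝ, t ≠ t₀ → 1 - 2 * c * (t - t₀) ≠ 0 →
      deriv (fun s : ℝ => u x s) t - (1 / (t - t₀)) * deriv (fun y : ℝ => (u y t) ^ 2) x
        = deriv (fun y : ℝ => deriv (fun z : ℝ => u z t) y) x + (1 / (t - t₀)) * u x t := by
  intro x t ht hD
  have ht' : t - t₀ ≠ 0 := sub_ne_zero.mpr ht
  -- time derivative
  have h1 : deriv (fun s : ℝ => u x s) t
      = c / (1 - 2 * c * (t - t₀)) ^ 2 * (x + 1) := by
    have hfun : (fun s : ℝ => u x s)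
        = fun s : ℝ => c * (s - t₀) / (1 - 2 * c * (s - t₀)) * (x + 1) := by
      funext s; rw [hu, hb]
    rw [hfun]
    have hnum : HasDerivAt (fun s : ℝ => c * (s - t₀)) c t := by
      simpa using ((hasDerivAt_id t).sub_const t₀).const_mul c
    have hden : HasDerivAt (fun s : ℝ => 1 - 2 * c * (s - t₀)) (-(2 * c)) t := by
      simpa using (((hasDerivAt_id t).sub_const t₀).const_mul (2 * c)).const_sub 1
    have hdiv := (hnum.div hden hD).mul_const (x + 1)
    refine hdiv.deriv.trans ?_
    ring
  -- spatial derivative of u^2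
  have h2 : deriv (fun y : ℝ => (u y t) ^ 2) x = 2 * (b t) ^ 2 * (x + 1) := by
    have hfun : (fun y : ℝ => (u y t) ^ 2) = fun y : ℝ => (b t * (y + 1)) ^ 2 := by
      funext y; rw [hu]
    rw [hfun]
    have h : HasDerivAt (fun y : ℝ => (b t * (y + 1)) ^ 2)
        (2 * (b t * (x + 1)) ^ 1 * (b t)) x := by
      simpa using (((hasDerivAt_id x).add_const 1).const_mul (b t)).fun_pow 2
    rw [h.deriv]; ring
  -- second spatial derivative
  have h3 : deriv (fun y : ℝ => deriv (fun z : ℝ => u z t) y) x = 0 := by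
    have hfun : (fun y : ℝ => deriv (fun z : ℝ => u z t) y) = fun _ : ℝ => b t := by
      funext y
      have hf : (fun z : ℝ => u z t) = fun z : ℝ => b t * (z + 1) := by
        funext z; rw [hu]
      rw [hf]
      have h : HasDerivAt (fun z : ℝ => b t * (z + 1)) (b t) y := by
        simpa using ((hasDerivAt_id y).add_const 1).const_mul (b t)
      simp [h.deriv]
    rw [hfun, deriv_const]
  rw [h1, h2, h3, hu, hb]
  field_simp
  ring
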